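/- Let a, d, k be positive integers with gcd(a,d)=1 and 2 ≤ k ≤ a, let a−1 = q(k−1)+r with 0 ≤ r < k−1, and let λ ∈ ℂ with λ^{d} = 1. Then for every integer ν ≥ 0, Σ_{i=1}^{a−1} λ^{m_i} m_i^{ν} = Σ_{ℓ=0}^{ν} C(ν,ℓ)·(d^ℓ/(ℓ+1))·Σ_{j=0}^{ℓ} C(ℓ+1,j) B_j · ( −λ^{a} a^{ν−ℓ} − Σ_{s=1}^{q} ( λ^{(s+1)a}((s+1)a)^{ν−ℓ} − λ^{sa}(sa)^{ν−ℓ} )·(s(k−1)+1)^{ℓ+1−j} + λ^{(q+1)a}((q+1)a)^{ν−ℓ}·(q(k−1)+r+1)^{ℓ+1−j} ), where m_i is taken with respect to the sequence a, a+d, …, a+(k−1)d. -/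

import Mathlib

open Finset

/-- `n` is representable as a nonnegative integer combination of the `a i`. -/
def Representable {k : ℕ} (a : Fin k → ℕ) (n : ℕ) : Prop :=
  ∃ x : Fin k → ℕ, n = ∑ i, x i * a i

lemma sum_range_pow_complex (n p : ℕ) :
    ∑ s ∈ range n, (s:ℂ)^p =
      ∑ i ∈ range (p+1), ((bernoulli i : ℚ):ℂ) * (((p+1).choose i : ℕ):ℂ) * (n:ℂ)^(p+1-i) / ((p:ℂ)+1) := by
  have h := congrArg (algebraMap ℚ ℂ) (sum_range_pow n p)
  simp only [map_sum, map_div₀, map_mul, map_pow, map_natCast, map_add, map_one] at h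
  convert h using 2
  rw [eq_ratCast]

lemma abel_sum (c A : ℕ → ℂ) (q : ℕ) :
    ∑ t ∈ range (q+1), c (t+1) * (A (t+1) - A t) =
      c (q+1) * A (q+1) - c 1 * A 0 - ∑ t ∈ Icc 1 q, (c (t+1) - c t) * A t := by
  induction q with
  | zero => simp; ring
  | succ q ih =>
    rw [Finset.sum_range_succ, ih, show q+1+1 = q+2 from rfl]
    rw [show Icc 1 (q+1) = insert (q+1) (Icc 1 q) by ext x; simp; omega]
    rw [Finset.sum_insert (by simp)]
    ring

lemma sum_Ioc_partition (g : ℕ → ℕ) (hg : Monotone g) (n : ℕ) (F : ℕ → ℂ) :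
    ∑ t ∈ range n, ∑ s ∈ Ioc (g t) (g (t+1)), F s = ∑ s ∈ Ioc (g 0) (g n), F s := by
  induction n with
  | zero => simp
  | succ n ih =>
    rw [Finset.sum_range_succ, ih]
    exact Finset.sum_Ioc_consecutive F (hg (by omega)) (hg (by omega))

lemma sum_Ioc_pow (u v p : ℕ) (huv : u ≤ v) :
    ∑ s ∈ Ioc u v, (s:ℂ)^p = (∑ s ∈ range (v+1), (s:ℂ)^p) - ∑ s ∈ range (u+1), (s:ℂ)^p := by
  have key := Finset.sum_Ioc_consecutive (fun s => (s:ℂ)^p) (Nat.zero_le u) huv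
  have h0 : ∀ w : ℕ, (0:ℂ)^p + ∑ s ∈ Ioc 0 w, (s:ℂ)^p = ∑ s ∈ range (w+1), (s:ℂ)^p := by
    intro w; induction w with
    | zero => simp
    | succ w ih =>
      rw [Finset.sum_range_succ, ← ih,
        show Ioc 0 (w+1) = insert (w+1) (Ioc 0 w) by ext x; simp; omega,
        Finset.sum_insert (by simp)]
      ring
  rw [← h0, ← h0, ← key]; ring

lemma sum_single_aux (a d k w c : ℕ) (hc : c < k) :
    ∑ x : Fin k, (if x = (⟨c, hc⟩ : Fin k) then w else 0) * (a + (x:ℕ)*d) = w * (a + c*d) := by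
  simp only [ite_mul, zero_mul]
  rw [Finset.sum_ite_eq' univ (⟨c, hc⟩ : Fin k) (fun j => w * (a + (j:ℕ)*d))]
  simp

lemma repr_val (a d k : ℕ) (hk : 2 ≤ k) (t s : ℕ)
    (hs1 : t*(k-1) < s) (hs2 : s ≤ (t+1)*(k-1)) :
    Representable (fun j : Fin k => a + (j:ℕ)*d) ((t+1)*a + s*d) := by
  set e := k - 1 with he
  have he1 : 1 ≤ e := by omega
  have hek : e < k := by omega
  set u := s / e with hu
  set v := s % e with hv
  have hs : s = u * e + v := by rw [hu, hv, Nat.div_add_mod']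
  have hve : v < e := Nat.mod_lt _ (by omega)
  by_cases hv0 : v = 0
  · have hut : u = t + 1 := by
      have h1 : t < u := by
        by_contra hc; push_neg at hc
        have := Nat.mul_le_mul_right e hc
        omega
      have h2 : u ≤ t + 1 := by
        by_contra hc; push_neg at hc
        have := Nat.mul_le_mul_right e (show t+2 ≤ u by omega)
        have h3 : (t+2)*e = (t+1)*e + e := by ring
        omega
      omega
    refine ⟨fun j => if j = (⟨e, hek⟩ : Fin k) then t+1 else 0, ?_⟩
    rw [show (∑ i : Fin k, (fun j => if j = (⟨e, hek⟩ : Fin k) then t+1 else 0) i * ((fun j : Fin k => a + (j:ℕ)*d) i)) = (t+1) * (a + e*d) from sum_single_aux a d k (t+1) e hek]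
    have h4 : u*e = (t+1)*e := by rw [hut]
    have : s = (t+1) * e := by omega
    rw [this]; ring
  · have hut : u = t := by
      have h1 : t ≤ u := by
        by_contra hc; push_neg at hc
        have := Nat.mul_le_mul_right e (show u+1 ≤ t by omega)
        have h3 : (u+1)*e = u*e + e := by ring
        omega
      have h2 : u ≤ t := by
        by_contra hc; push_neg at hc
        have := Nat.mul_le_mul_right e (show t+1 ≤ u by omega)
        have h3 : (t+1)*e = t*e + e := by ring
        omega
      omega
    have hvk : v < k := by omega
    refine ⟨fun j => (if j = (⟨e, hek⟩ : Fin k) then t else 0) +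
      (if j = (⟨v, hvk⟩ : Fin k) then 1 else 0), ?_⟩
    simp only [add_mul]
    rw [Finset.sum_add_distrib, sum_single_aux a d k t e hek, sum_single_aux a d k 1 v hvk]
    have h4 : u*e = t*e := by rw [hut]
    have : s = t * e + v := by omega
    rw [this]; ring

lemma isLeast_m (a d k : ℕ) (ha : 0 < a) (hk : 2 ≤ k) (hgcd : Nat.gcd a d = 1)
    (t s : ℕ) (hs1 : t*(k-1) < s) (hs2 : s ≤ (t+1)*(k-1)) (hsa : s < a) :
    IsLeast {n : ℕ | 0 < n ∧
      Representable (fun j : Fin k => a + (j:ℕ) * d) n ∧ n % a = (s*d) % a}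
      ((t+1)*a + s*d) := by
  constructor
  · refine ⟨by positivity, repr_val a d k hk t s hs1 hs2, ?_⟩
    rw [add_comm, Nat.add_mul_mod_self_right]
  · rintro n ⟨hn0, ⟨x, hx⟩, hnmod⟩
    set T := ∑ i : Fin k, x i with hT
    set S := ∑ i : Fin k, (i:ℕ) * x i with hS
    have hn : n = T * a + S * d := by
      rw [hx, hT, hS, Finset.sum_mul, Finset.sum_mul]
      rw [← Finset.sum_add_distrib]
      congr 1; ext i; ring
    have hmod : S % a = s := by
      have h1 : (S * d) % a = (s * d) % a := by
        rw [← hnmod, hn, add_comm (T*a) (S*d), Nat.add_mul_mod_self_right]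
      have h2 : S ≡ s [MOD a] := Nat.ModEq.cancel_right_of_coprime hgcd h1
      have h3 : S % a = s % a := h2
      rw [Nat.mod_eq_of_lt hsa] at h3
      exact h3
    obtain ⟨w, hw⟩ : ∃ w, S = s + w * a := ⟨S / a, by
      have hda := Nat.div_add_mod S a
      have hcomm : a * (S/a) = (S/a) * a := Nat.mul_comm _ _
      omega⟩
    have hST : S ≤ (k-1) * T := by
      rw [hS, hT, Finset.mul_sum]
      apply Finset.sum_le_sum
      intro i _
      have : (i:ℕ) ≤ k - 1 := by omega
      exact Nat.mul_le_mul_right (x i) this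
    have hTt : t + 1 ≤ T := by
      by_contra hc; push_neg at hc
      have hTle : T ≤ t := by omega
      have h5 := Nat.mul_le_mul_left (k-1) hTle
      have h6 : (k-1)*t = t*(k-1) := Nat.mul_comm _ _
      omega
    calc (t+1)*a + s*d ≤ T*a + s*d := by
          have := Nat.mul_le_mul_right a hTt; omega
      _ ≤ T*a + S*d := by
          have : s ≤ S := by omega
          have := Nat.mul_le_mul_right d this; omega
      _ = n := hn.symm

lemma mod_mem (a d : ℕ) (ha : 0 < a) (hgcd : Nat.gcd a d = 1) (s : ℕ)
    (hs : s ∈ Icc 1 (a-1)) : (s*d) % a ∈ Icc 1 (a-1) := by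
  rw [Finset.mem_Icc] at hs ⊢
  have hlt : (s*d) % a < a := Nat.mod_lt _ ha
  refine ⟨?_, by omega⟩
  by_contra hc; push_neg at hc
  have h0 : (s*d) % a = 0 := by omega
  have hdvd : a ∣ s * d := Nat.dvd_of_mod_eq_zero h0
  have : a ∣ s := (Nat.Coprime.dvd_of_dvd_mul_right hgcd hdvd)
  have := Nat.le_of_dvd (by omega) this
  omega

lemma sum_reindex (a d : ℕ) (ha : 0 < a) (hgcd : Nat.gcd a d = 1) (F : ℕ → ℂ) :
    ∑ s ∈ Icc 1 (a-1), F ((s*d) % a) = ∑ i ∈ Icc 1 (a-1), F i := by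
  have hmaps : ∀ s ∈ Icc 1 (a-1), (s*d) % a ∈ Icc 1 (a-1) := fun s hs => mod_mem a d ha hgcd s hs
  have hinj : ∀ s₁ ∈ Icc 1 (a-1), ∀ s₂ ∈ Icc 1 (a-1),
      (s₁*d) % a = (s₂*d) % a → s₁ = s₂ := by
    intro s₁ h1 s₂ h2 heq
    rw [Finset.mem_Icc] at h1 h2
    have : s₁ ≡ s₂ [MOD a] := Nat.ModEq.cancel_right_of_coprime hgcd heq
    have h3 : s₁ % a = s₂ % a := this
    rw [Nat.mod_eq_of_lt (by omega), Nat.mod_eq_of_lt (by omega)] at h3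
    exact h3
  refine Finset.sum_bij (fun s _ => (s*d) % a) hmaps hinj ?_ (fun s _ => rfl)
  intro b hb
  obtain ⟨s, hs, heq⟩ := Finset.surj_on_of_inj_on_of_card_le (fun s _ => (s*d) % a)
    hmaps (fun s₁ s₂ h1 h2 => hinj s₁ h1 s₂ h2) le_rfl b hb
  exact ⟨s, hs, heq.symm⟩

lemma reorg (l q : ℕ) (c B K : ℕ → ℂ) (n : ℕ → ℕ) (hn0 : n 0 = 1) :
    c (q+1) * (∑ j ∈ range (l+1), B j * K j * ((n (q+1) : ℕ) : ℂ)^(l+1-j) / ((l:ℂ)+1))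
      - c 1 * (∑ j ∈ range (l+1), B j * K j * ((n 0 : ℕ) : ℂ)^(l+1-j) / ((l:ℂ)+1))
      - ∑ t ∈ Icc 1 q, (c (t+1) - c t) *
          (∑ j ∈ range (l+1), B j * K j * ((n t : ℕ):ℂ)^(l+1-j) / ((l:ℂ)+1))
    = (1/((l:ℂ)+1)) * ∑ j ∈ range (l+1), K j * B j *
        (-(c 1) - ∑ s ∈ Icc 1 q, (c (s+1) - c s) * ((n s : ℕ):ℂ)^(l+1-j)
          + c (q+1) * ((n (q+1) : ℕ):ℂ)^(l+1-j)) := by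
  rw [hn0]
  simp only [Nat.cast_one, one_pow, Finset.mul_sum]
  rw [show (∑ t ∈ Icc 1 q, ∑ j ∈ range (l+1),
      (c (t+1) - c t) * (B j * K j * ((n t:ℕ):ℂ)^(l+1-j) / ((l:ℂ)+1)))
      = ∑ j ∈ range (l+1), ∑ t ∈ Icc 1 q,
          (c (t+1) - c t) * (B j * K j * ((n t:ℕ):ℂ)^(l+1-j) / ((l:ℂ)+1)) from
    Finset.sum_comm]
  rw [← Finset.sum_sub_distrib, ← Finset.sum_sub_distrib]
  apply Finset.sum_congr rfl
  intro j _
  rw [show (∑ t ∈ Icc 1 q, (c (t+1) - c t) * (B j * K j * ((n t:ℕ):ℂ)^(l+1-j) / ((l:ℂ)+1)))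
      = B j * K j / ((l:ℂ)+1) * ∑ t ∈ Icc 1 q, (c (t+1) - c t) * ((n t:ℕ):ℂ)^(l+1-j) from by
    rw [Finset.mul_sum]; exact Finset.sum_congr rfl fun t _ => by ring]
  ring

lemma per_l (l q : ℕ) (c : ℕ → ℂ) (n : ℕ → ℕ) (hn0 : n 0 = 1) :
    ∑ t ∈ range (q+1), c (t+1) *
        ((∑ s ∈ range (n (t+1)), (s:ℂ)^l) - ∑ s ∈ range (n t), (s:ℂ)^l)
    = (1/((l:ℂ)+1)) * ∑ j ∈ range (l+1), ((bernoulli j : ℚ):ℂ) * (((l+1).choose j : ℕ):ℂ) *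
        (-(c 1) - ∑ s ∈ Icc 1 q, (c (s+1) - c s) * ((n s : ℕ):ℂ)^(l+1-j)
          + c (q+1) * ((n (q+1) : ℕ):ℂ)^(l+1-j)) := by
  have hab := abel_sum c (fun t => ∑ s ∈ range (n t), (s:ℂ)^l) q
  rw [hab]
  have hfa : ∀ w : ℕ, (∑ s ∈ range (n w), (s:ℂ)^l) =
      ∑ j ∈ range (l+1), ((bernoulli j : ℚ):ℂ) * (((l+1).choose j : ℕ):ℂ) *
        ((n w : ℕ):ℂ)^(l+1-j) / ((l:ℂ)+1) := fun w => sum_range_pow_complex (n w) l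
  rw [hfa (q+1), hfa 0]
  rw [show (∑ t ∈ Icc 1 q, (c (t+1) - c t) * ∑ s ∈ range (n t), (s:ℂ)^l)
      = ∑ t ∈ Icc 1 q, (c (t+1) - c t) *
          (∑ j ∈ range (l+1), ((bernoulli j : ℚ):ℂ) * (((l+1).choose j : ℕ):ℂ) *
            ((n t : ℕ):ℂ)^(l+1-j) / ((l:ℂ)+1)) from
    Finset.sum_congr rfl fun t _ => by rw [hfa t]]
  have hre := reorg l q c (fun j => ((bernoulli j : ℚ):ℂ)) (fun j => (((l+1).choose j : ℕ):ℂ)) n hn0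
  rw [hre]
  congr 1
  apply Finset.sum_congr rfl
  intro j _
  ring

/-- Weighted power sums of the minimal representatives when `λ^d = 1`. -/
theorem stmt14 (a d k q r : ℕ) (ha : 0 < a) (hd : 0 < d)
    (hk : 2 ≤ k) (hka : k ≤ a) (hgcd : Nat.gcd a d = 1)
    (hqr : a - 1 = q * (k - 1) + r) (hr : r < k - 1)
    (m : ℕ → ℕ)
    (hm : ∀ i ∈ Finset.Icc 1 (a - 1),
      IsLeast {n : ℕ | 0 < n ∧
        Representable (fun j : Fin k => a + (j : ℕ) * d) n ∧ n % a = i} (m i))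
    (lam : ℂ) (hld : lam ^ d = 1) (ν : ℕ) :
    ∑ i ∈ Finset.Icc 1 (a - 1), lam ^ (m i) * (m i : ℂ) ^ ν =
      ∑ l ∈ Finset.range (ν + 1), (ν.choose l : ℂ) * ((d : ℂ) ^ l / ((l : ℂ) + 1)) *
        ∑ j ∈ Finset.range (l + 1), ((l + 1).choose j : ℂ) * ((bernoulli j : ℚ) : ℂ) *
          ( -(lam ^ a) * (a : ℂ) ^ (ν - l)
            - ∑ s ∈ Finset.Icc 1 q,
                (lam ^ ((s + 1) * a) * (((s + 1) * a : ℕ) : ℂ) ^ (ν - l)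
                  - lam ^ (s * a) * ((s * a : ℕ) : ℂ) ^ (ν - l)) *
                  ((s * (k - 1) + 1 : ℕ) : ℂ) ^ (l + 1 - j)
            + lam ^ ((q + 1) * a) * (((q + 1) * a : ℕ) : ℂ) ^ (ν - l) *
                ((q * (k - 1) + r + 1 : ℕ) : ℂ) ^ (l + 1 - j) ) := by
  have ha2 : 2 ≤ a := le_trans hk hka
  have he1 : 1 ≤ k - 1 := by omega
  set g : ℕ → ℕ := fun t => min (t*(k-1)) (a-1) with hgdef
  have hgmono : Monotone g := fun x y hxy =>
    min_le_min (Nat.mul_le_mul_right _ hxy) le_rfl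
  have hg0 : g 0 = 0 := by simp [hgdef]
  have hgle : ∀ t, t ≤ q → g t = t*(k-1) := by
    intro t ht
    have h1 : t*(k-1) ≤ q*(k-1) := Nat.mul_le_mul_right _ ht
    simp only [hgdef]; omega
  have hgq1 : g (q+1) = a - 1 := by
    have h1 : (q+1)*(k-1) = q*(k-1) + (k-1) := by ring
    simp only [hgdef]; omega
  -- Step 1: reindex
  have hrei := sum_reindex a d (by omega) hgcd (fun i => lam ^ (m i) * ((m i : ℕ):ℂ) ^ ν)
  rw [← hrei]
  -- Step 2: partition
  rw [show Icc 1 (a-1) = Ioc (g 0) (g (q+1)) from by rw [hg0, hgq1]; ext x; simp; omega]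
  have hpart := sum_Ioc_partition g hgmono (q+1)
    (fun s => lam ^ (m (s*d % a)) * ((m (s*d % a) : ℕ):ℂ) ^ ν)
  rw [← hpart]
  -- Step 3: evaluate each term
  have hstep2 : ∀ t ∈ range (q+1), ∀ s ∈ Ioc (g t) (g (t+1)),
      lam ^ (m (s*d % a)) * ((m (s*d % a) : ℕ):ℂ) ^ ν
      = ∑ l ∈ range (ν+1), (ν.choose l : ℂ) * (d:ℂ)^l *
          (lam^((t+1)*a) * (((t+1)*a : ℕ):ℂ)^(ν-l)) * (s:ℂ)^l := by
    intro t ht s hs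
    rw [Finset.mem_range] at ht
    rw [Finset.mem_Ioc] at hs
    have hgt : g t = t*(k-1) := hgle t (by omega)
    have hs1 : t*(k-1) < s := by omega
    have hs2 : s ≤ (t+1)*(k-1) := le_trans hs.2 (min_le_left _ _)
    have hsa : s < a := by
      have h2 : g (t+1) ≤ a-1 := min_le_right _ _
      omega
    have hsmem : s ∈ Icc 1 (a-1) := by rw [Finset.mem_Icc]; omega
    have himem : s*d % a ∈ Icc 1 (a-1) := mod_mem a d (by omega) hgcd s hsmem
    have hmeq : m (s*d % a) = (t+1)*a + s*d :=
      IsLeast.unique (hm _ himem) (isLeast_m a d k (by omega) hk hgcd t s hs1 hs2 hsa)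
    rw [hmeq]
    rw [pow_add, mul_comm s d, pow_mul lam d s, hld, one_pow, mul_one]
    rw [show (((t+1)*a + d*s : ℕ):ℂ) = (s:ℂ)*(d:ℂ) + (((t+1)*a : ℕ):ℂ) from by
      push_cast; ring]
    rw [add_pow, Finset.mul_sum]
    refine Finset.sum_congr rfl fun l hl => ?_
    rw [mul_pow]; ring
  apply Eq.trans (Finset.sum_congr rfl (fun t ht => Finset.sum_congr rfl (hstep2 t ht)))
  -- Step 4: swap inner sums, evaluate power sums
  have hstep3 : ∀ t ∈ range (q+1),
      (∑ s ∈ Ioc (g t) (g (t+1)), ∑ l ∈ range (ν+1), (ν.choose l : ℂ) * (d:ℂ)^l *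
          (lam^((t+1)*a) * (((t+1)*a : ℕ):ℂ)^(ν-l)) * (s:ℂ)^l)
      = ∑ l ∈ range (ν+1), (ν.choose l : ℂ) * (d:ℂ)^l *
          (lam^((t+1)*a) * (((t+1)*a : ℕ):ℂ)^(ν-l)) *
          ((∑ s ∈ range (g (t+1) + 1), (s:ℂ)^l) - ∑ s ∈ range (g t + 1), (s:ℂ)^l) := by
    intro t ht
    rw [Finset.sum_comm]
    refine Finset.sum_congr rfl fun l hl => ?_
    rw [← Finset.mul_sum, sum_Ioc_pow (g t) (g (t+1)) l (hgmono (Nat.le_succ t))]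
  apply Eq.trans (Finset.sum_congr rfl hstep3)
  apply Eq.trans Finset.sum_comm
  -- Step 5: per-l computation
  apply Finset.sum_congr rfl
  intro l hl
  have hpl := per_l l q (fun mm => lam^(mm*a) * ((mm*a : ℕ):ℂ)^(ν-l)) (fun t => g t + 1)
    (by show g 0 + 1 = 1; rw [hg0])
  rw [show (∑ t ∈ range (q+1), (ν.choose l : ℂ) * (d:ℂ)^l *
      (lam^((t+1)*a) * (((t+1)*a : ℕ):ℂ)^(ν-l)) *
      ((∑ s ∈ range (g (t+1) + 1), (s:ℂ)^l) - ∑ s ∈ range (g t + 1), (s:ℂ)^l))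
      = (ν.choose l : ℂ) * (d:ℂ)^l * ∑ t ∈ range (q+1),
          (lam^((t+1)*a) * (((t+1)*a : ℕ):ℂ)^(ν-l)) *
          ((∑ s ∈ range (g (t+1) + 1), (s:ℂ)^l) - ∑ s ∈ range (g t + 1), (s:ℂ)^l) from by
    rw [Finset.mul_sum]; exact Finset.sum_congr rfl fun t _ => by ring]
  rw [hpl]
  rw [show (∑ j ∈ range (l+1), ((l + 1).choose j : ℂ) * ((bernoulli j : ℚ) : ℂ) *
          ( -(lam ^ a) * (a : ℂ) ^ (ν - l)
            - ∑ s ∈ Icc 1 q,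
                (lam ^ ((s + 1) * a) * (((s + 1) * a : ℕ) : ℂ) ^ (ν - l)
                  - lam ^ (s * a) * ((s * a : ℕ) : ℂ) ^ (ν - l)) *
                  ((s * (k - 1) + 1 : ℕ) : ℂ) ^ (l + 1 - j)
            + lam ^ ((q + 1) * a) * (((q + 1) * a : ℕ) : ℂ) ^ (ν - l) *
                ((q * (k - 1) + r + 1 : ℕ) : ℂ) ^ (l + 1 - j)))
      = ∑ j ∈ range (l+1), ((bernoulli j : ℚ):ℂ) * (((l+1).choose j : ℕ):ℂ) *
        (-(lam^(1*a) * ((1*a : ℕ):ℂ)^(ν-l))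
          - ∑ s ∈ Icc 1 q, (lam^((s+1)*a) * (((s+1)*a : ℕ):ℂ)^(ν-l)
              - lam^(s*a) * ((s*a : ℕ):ℂ)^(ν-l)) * ((g s + 1 : ℕ):ℂ)^(l+1-j)
          + lam^((q+1)*a) * (((q+1)*a : ℕ):ℂ)^(ν-l) * ((g (q+1) + 1 : ℕ):ℂ)^(l+1-j)) from by
    refine Finset.sum_congr rfl fun j hj => ?_
    have hc1 : lam^(1*a) * ((1*a : ℕ):ℂ)^(ν-l) = lam^a * (a:ℂ)^(ν-l) := by norm_num
    have hsum : (∑ s ∈ Icc 1 q, (lam^((s+1)*a) * (((s+1)*a : ℕ):ℂ)^(ν-l)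
              - lam^(s*a) * ((s*a : ℕ):ℂ)^(ν-l)) * ((g s + 1 : ℕ):ℂ)^(l+1-j))
        = ∑ s ∈ Icc 1 q, (lam^((s+1)*a) * (((s+1)*a : ℕ):ℂ)^(ν-l)
              - lam^(s*a) * ((s*a : ℕ):ℂ)^(ν-l)) * ((s*(k-1) + 1 : ℕ):ℂ)^(l+1-j) := by
      refine Finset.sum_congr rfl fun s hs => ?_
      rw [Finset.mem_Icc] at hs
      rw [hgle s hs.2]
    have hlast : g (q+1) + 1 = q*(k-1) + r + 1 := by rw [hgq1]; omega
    rw [hc1, hsum, hlast]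
    ring]
  ring
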